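/- arXiv:1410.7046 — 2 statements merged into one kernel-verified Lean document; each statement's English description precedes it below -/
import Mathlib

section
/- For every integer i ≥ 1 and every ε₂ ∈ (0,1), the number of tournaments on the fixed labelled vertex set {1,…,i} that contain a homogeneous set S with i^(ε₂) ≤ |S| ≤ i/2 is at most 2^(i(i−1)/2) · 2^(3i/2 − i^(1+ε₂)/2). -/
open Finset

attribute [local instance] Classical.propDecidable

/-- A tournament on vertex set `Fin n`: for every pair of distinct vertices exactly one
direction is present, and no vertex is adjacent to itself. -/
structure Tournament where
  n : ℕ
  adj : Fin n → Fin n → Prop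
  asymm : ∀ u v, adj u v → ¬ adj v u
  total : ∀ u v, u ≠ v → adj u v ∨ adj v u

namespace Tournament

/-- `S` is a transitive set: the adjacency relation restricted to `S` is a strict linear
order (by the tournament axioms this is equivalent to transitivity on `S`). -/
def IsTransitiveSet (T : Tournament) (S : Finset (Fin T.n)) : Prop :=
  ∀ a ∈ S, ∀ b ∈ S, ∀ c ∈ S, T.adj a b → T.adj b c → T.adj a c

/-- `tr T`: the maximum size of a transitive subset of the vertices of `T`. -/
noncomputable def transNum (T : Tournament) : ℕ :=
  sSup {m | ∃ S : Finset (Fin T.n), T.IsTransitiveSet S ∧ S.card = m}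

/-- `T` contains an induced copy of `H`. -/
def Contains (T H : Tournament) : Prop :=
  ∃ f : Fin H.n → Fin T.n, Function.Injective f ∧
    ∀ u v : Fin H.n, H.adj u v ↔ T.adj (f u) (f v)

/-- `T` is `H`-free: no set of vertices of `T` induces a subtournament isomorphic to `H`. -/
def HFree (T H : Tournament) : Prop := ¬ T.Contains H

/-- `S` is a homogeneous set of `T`. -/
def IsHomogeneous (T : Tournament) (S : Finset (Fin T.n)) : Prop :=
  ∀ v, v ∉ S → (∀ s ∈ S, T.adj v s) ∨ (∀ s ∈ S, T.adj s v)

/-- A tournament is prime if it has no nontrivial homogeneous set. -/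
def IsPrime (T : Tournament) : Prop :=
  ¬ ∃ S : Finset (Fin T.n), T.IsHomogeneous S ∧ 1 < S.card ∧ S.card < T.n

/-- The backward-edge graph of `T` under the ordering `σ` (where `σ p` is the vertex in
position `p`): `u` and `v` are joined iff the tournament edge between them goes from the
later position to the earlier one. -/
def backAdj (T : Tournament) (σ : Equiv.Perm (Fin T.n)) (u v : Fin T.n) : Prop :=
  (σ.symm u < σ.symm v ∧ T.adj v u) ∨ (σ.symm v < σ.symm u ∧ T.adj u v)

/-- `σ` is a galaxy ordering of `T` with center assignment `ctr` (mapping each vertex to the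
center of its star component, centers and singletons being fixed points): every backward edge
joins a leaf to its center, each star is a left star or a right star, and no center of a star
lies between two leaves of another star. -/
def IsGalaxyOrdering (T : Tournament) (σ : Equiv.Perm (Fin T.n))
    (ctr : Fin T.n → Fin T.n) : Prop :=
  (∀ v, ctr (ctr v) = ctr v) ∧
  (∀ v, ctr v ≠ v → T.backAdj σ v (ctr v)) ∧
  (∀ u v, T.backAdj σ u v → (ctr u = u ∧ ctr v = u) ∨ (ctr v = v ∧ ctr u = v)) ∧
  (∀ c, ctr c = c →
    (∀ v, ctr v = c → v = c ∨ σ.symm v < σ.symm c) ∨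
    (∀ v, ctr v = c → v = c ∨ σ.symm c < σ.symm v)) ∧
  (∀ c, ctr c = c → (∃ v, v ≠ c ∧ ctr v = c) →
    ∀ l₁ l₂, l₁ ≠ ctr l₁ → l₂ ≠ ctr l₂ → ctr l₁ = ctr l₂ → ctr l₁ ≠ c →
      ¬ (σ.symm l₁ < σ.symm c ∧ σ.symm c < σ.symm l₂))

/-- A tournament is a galaxy if it admits a galaxy ordering. -/
def IsGalaxy (T : Tournament) : Prop := ∃ σ ctr, T.IsGalaxyOrdering σ ctr

/-- A tournament is a star: it has an ordering of its vertices under which the backward-edge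
graph is connected and is a star `K_{1,t}` whose center comes before all its leaves or after
all its leaves. -/
def IsStar (T : Tournament) : Prop :=
  ∃ (σ : Equiv.Perm (Fin T.n)) (c : Fin T.n),
    (∀ v, v ≠ c → T.backAdj σ c v) ∧
    (∀ u v, T.backAdj σ u v → u = c ∨ v = c) ∧
    ((∀ v, v ≠ c → σ.symm c < σ.symm v) ∨ (∀ v, v ≠ c → σ.symm v < σ.symm c))

/-- `P` is a partition of the vertex set of `T` into transitive sets. -/
def IsTransPartition (T : Tournament) (P : Finset (Finset (Fin T.n))) : Prop :=
  (∀ S ∈ P, T.IsTransitiveSet S) ∧ ∀ v : Fin T.n, ∃! S, S ∈ P ∧ v ∈ S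

/-- The chromatic number of `T`: the least number of parts in a partition of the vertices of
`T` into transitive sets. -/
noncomputable def chromaticNum (T : Tournament) : ℕ :=
  sInf {m | ∃ P : Finset (Finset (Fin T.n)), T.IsTransPartition P ∧ P.card = m}

/-- The directed density from `X` to `Y`. -/
noncomputable def density (T : Tournament) (X Y : Finset (Fin T.n)) : ℝ :=
  (((X ×ˢ Y).filter fun p => T.adj p.1 p.2).card : ℝ) / ((X.card : ℝ) * (Y.card : ℝ))

/-- Common part of the definitions of l-sequences and m-sequences: pairwise disjoint
nonempty sets with density at least `1 - lam` forwards. -/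
def SeqBase (T : Tournament) (lam : ℝ) (m : ℕ) (S : Fin m → Finset (Fin T.n)) : Prop :=
  (∀ i, (S i).Nonempty) ∧ (∀ i j, i ≠ j → Disjoint (S i) (S j)) ∧
  ∀ i j : Fin m, i < j → 1 - lam ≤ T.density (S i) (S j)

/-- A `(c, lam)`-l-sequence: every set is `c`-linear. -/
def IsLSeq (T : Tournament) (c lam : ℝ) (m : ℕ) (S : Fin m → Finset (Fin T.n)) : Prop :=
  T.SeqBase lam m S ∧ ∀ i, c * (T.n : ℝ) ≤ ((S i).card : ℝ)

/-- A `(c₁, c₂, lam, eps)`-m-sequence: sets in odd positions (even `0`-based indices) are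
`c₂`-linear, sets in even positions are transitive and `(c₁, eps)`-big. -/
def IsMSeq (T : Tournament) (c₁ c₂ lam eps : ℝ) (m : ℕ)
    (S : Fin m → Finset (Fin T.n)) : Prop :=
  T.SeqBase lam m S ∧
  (∀ i : Fin m, (i : ℕ) % 2 = 0 → c₂ * (T.n : ℝ) ≤ ((S i).card : ℝ)) ∧
  (∀ i : Fin m, (i : ℕ) % 2 = 1 →
    T.IsTransitiveSet (S i) ∧ c₁ * (T.n : ℝ) ^ eps ≤ ((S i).card : ℝ))

/-- A sequence of sets is smooth if the `1 - lam` density condition holds pointwise. -/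
def Smooth (T : Tournament) (lam : ℝ) (m : ℕ) (S : Fin m → Finset (Fin T.n)) : Prop :=
  ∀ i j : Fin m, i < j →
    (∀ v ∈ S i, 1 - lam ≤ T.density {v} (S j)) ∧
    (∀ v ∈ S j, 1 - lam ≤ T.density (S i) {v})

/-- `P` is a partition of the vertex set of `T` into homogeneous sets. -/
def IsHomogeneousPartition (T : Tournament) (P : Finset (Finset (Fin T.n))) : Prop :=
  (∀ A ∈ P, A.Nonempty ∧ T.IsHomogeneous A) ∧ ∀ v : Fin T.n, ∃! A, A ∈ P ∧ v ∈ A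

/-- `p T`: the least number of parts of a nontrivial homogeneous partition. -/
noncomputable def partNum (T : Tournament) : ℕ :=
  sInf {m | ∃ P : Finset (Finset (Fin T.n)),
    T.IsHomogeneousPartition P ∧ 1 < P.card ∧ P.card = m}

/-- `T` is `H`-far: for every nontrivial homogeneous partition `P` of the vertices of `H`,
`T` contains no subtournament isomorphic to the quotient tournament `H_P`. -/
def HFar (T H : Tournament) : Prop :=
  ∀ P : Finset (Finset (Fin H.n)), H.IsHomogeneousPartition P → 1 < P.card →
    ¬ ∃ g : {A // A ∈ P} → Fin T.n, Function.Injective g ∧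
        ∀ A B : {A // A ∈ P}, A ≠ B →
          ((∀ a ∈ A.1, ∀ b ∈ B.1, H.adj a b) ↔ T.adj (g A) (g B))

end Tournament

open Tournament

lemma lt_pairs_card (i : ℕ) :
    ((univ : Finset (Fin i × Fin i)).filter (fun p => p.1 < p.2)).card = i * (i - 1) / 2 := by
  classical
  have key : ((univ : Finset (Fin i × Fin i)).filter (fun p => p.1 < p.2)).card
      = ((univ : Finset (Fin i × Fin i)).filter (fun p => p.2 < p.1)).card := by
    apply Finset.card_bij' (fun p _ => p.swap) (fun p _ => p.swap) <;>
      (intro a ha <;> simp_all)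
  have hsplit := Finset.card_filter_add_card_filter_not
    (s := (univ : Finset (Fin i × Fin i)).filter (fun p => p.1 ≠ p.2))
    (p := fun p => p.1 < p.2)
  have e1 : ((univ : Finset (Fin i × Fin i)).filter (fun p => p.1 ≠ p.2)).filter
      (fun p => p.1 < p.2) = (univ : Finset (Fin i × Fin i)).filter (fun p => p.1 < p.2) := by
    ext p; simp +contextual [ne_of_lt]
  have e2 : ((univ : Finset (Fin i × Fin i)).filter (fun p => p.1 ≠ p.2)).filter
      (fun p => ¬ p.1 < p.2) = (univ : Finset (Fin i × Fin i)).filter (fun p => p.2 < p.1) := by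
    ext p; simp
    constructor
    · rintro ⟨h1, h2⟩; exact lt_of_le_of_ne h2 (Ne.symm h1)
    · intro h; exact ⟨ne_of_gt h, le_of_lt h⟩
  have hod : ((univ : Finset (Fin i × Fin i)).filter (fun p => p.1 ≠ p.2)).card
      = i * i - i := by
    have : (univ : Finset (Fin i × Fin i)).filter (fun p => p.1 ≠ p.2)
        = (univ : Finset (Fin i)).offDiag := by
      ext p; simp [Finset.mem_offDiag]
    rw [this, Finset.offDiag_card, Finset.card_univ, Fintype.card_fin]
  rw [e1, e2, hod, ← key] at hsplit
  have hmul : i * (i - 1) = i * i - i := by rw [Nat.mul_sub, Nat.mul_one]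
  omega

lemma cross_pairs (i : ℕ) (S : Finset (Fin i)) :
    S.card * Sᶜ.card ≤ ((univ : Finset (Fin i × Fin i)).filter
      (fun p => p.1 < p.2 ∧ ¬ (p.1 ∈ S ↔ p.2 ∈ S))).card := by
  classical
  rw [← Finset.card_product]
  apply Finset.card_le_card_of_injOn (fun p => if p.1 < p.2 then p else p.swap)
  · intro p hp
    simp only [Finset.mem_coe, Finset.mem_product, Finset.mem_compl] at hp ⊢
    obtain ⟨h1, h2⟩ := hp
    have hne : p.1 ≠ p.2 := fun h => h2 (h ▸ h1)
    by_cases hlt : p.1 < p.2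
    · simp only [if_pos hlt, Finset.mem_filter, Finset.mem_univ, true_and]
      exact ⟨hlt, fun h => h2 (h.mp h1)⟩
    · have : p.2 < p.1 := lt_of_le_of_ne (not_lt.mp hlt) (Ne.symm hne)
      simp only [if_neg hlt, Finset.mem_filter, Finset.mem_univ, true_and, Prod.fst_swap,
        Prod.snd_swap]
      exact ⟨this, fun h => h2 (h.mpr h1)⟩
  · intro p hp q hq h
    simp only [Finset.coe_product, Set.mem_prod, Finset.mem_coe, Finset.mem_compl] at hp hq
    dsimp only at h
    split_ifs at h <;> simp only [Prod.ext_iff, Prod.fst_swap, Prod.snd_swap] at h ⊢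
    · exact h
    · exact absurd (h.1 ▸ hp.1) hq.2
    · exact absurd hq.1 (h.1 ▸ hp.2)
    · exact ⟨h.2, h.1⟩

lemma pairs_bound (i : ℕ) (S : Finset (Fin i)) :
    ((univ : Finset (Fin i × Fin i)).filter
        (fun p => p.1 < p.2 ∧ (p.1 ∈ S ↔ p.2 ∈ S))).card + S.card * Sᶜ.card
      ≤ i * (i - 1) / 2 := by
  classical
  have h1 : ((univ : Finset (Fin i × Fin i)).filter
        (fun p => p.1 < p.2 ∧ (p.1 ∈ S ↔ p.2 ∈ S))).card
      + ((univ : Finset (Fin i × Fin i)).filter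
        (fun p => p.1 < p.2 ∧ ¬ (p.1 ∈ S ↔ p.2 ∈ S))).card
      = ((univ : Finset (Fin i × Fin i)).filter (fun p => p.1 < p.2)).card := by
    have := Finset.card_filter_add_card_filter_not
      (s := (univ : Finset (Fin i × Fin i)).filter (fun p => p.1 < p.2))
      (p := fun p => p.1 ∈ S ↔ p.2 ∈ S)
    rw [Finset.filter_filter, Finset.filter_filter] at this
    exact this
  have h2 := cross_pairs i S
  have h3 := lt_pairs_card i
  omega

lemma count_fixed (i : ℕ) (S : Finset (Fin i)) :
    ((univ : Finset (Fin i → Fin i → Bool)).filter (fun f =>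
        (∀ u v : Fin i, f u v = true → f v u = false) ∧
        (∀ u v : Fin i, u ≠ v → f u v = true ∨ f v u = true) ∧
        (∀ v, v ∉ S → (∀ s ∈ S, f v s = true) ∨ (∀ s ∈ S, f s v = true)))).card
      ≤ 2 ^ (((univ : Finset (Fin i × Fin i)).filter
            (fun p => p.1 < p.2 ∧ (p.1 ∈ S ↔ p.2 ∈ S))).card) * 2 ^ (Sᶜ.card) := by
  classical
  set A := ((univ : Finset (Fin i × Fin i)).filter
      (fun p => p.1 < p.2 ∧ (p.1 ∈ S ↔ p.2 ∈ S))) with hA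
  have hcod : (Finset.univ : Finset ((↑A → Bool) × (↑(Sᶜ) → Bool))).card
      = 2 ^ A.card * 2 ^ Sᶜ.card := by
    rw [Finset.card_univ, Fintype.card_prod, Fintype.card_fun, Fintype.card_fun,
      Fintype.card_coe, Fintype.card_coe, Fintype.card_bool]
  rw [← hcod]
  apply Finset.card_le_card_of_injOn
    (fun f => (fun p : ↑A => f p.1.1 p.1.2, fun v : ↑(Sᶜ) => decide (∀ s ∈ S, f v.1 s = true)))
    (fun _ _ => Finset.mem_univ _)
  intro f hf f' hf' heq
  simp only [Finset.coe_filter, Set.mem_setOf_eq, Finset.mem_univ, true_and] at hf hf'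
  obtain ⟨ha, ht, hh⟩ := hf
  obtain ⟨ha', ht', hh'⟩ := hf'
  -- basic facts
  have self : ∀ (g : Fin i → Fin i → Bool), (∀ u v, g u v = true → g v u = false) →
      ∀ u, g u u = false := by
    intro g hg u
    cases h : g u u with
    | false => rfl
    | true => have := hg u u h; rw [h] at this; exact this
  have neg : ∀ (g : Fin i → Fin i → Bool), (∀ u v, g u v = true → g v u = false) →
      (∀ u v, u ≠ v → g u v = true ∨ g v u = true) →
      ∀ u v, u ≠ v → g v u = !g u v := by
    intro g hg htot u v huv
    cases h : g u v with
    | true => simp [hg u v h]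
    | false =>
      rcases htot u v huv with h' | h'
      · rw [h] at h'; exact absurd h' (by simp)
      · simp [h']
  -- cross edges determined by the decide bit
  have cross : ∀ (g : Fin i → Fin i → Bool), (∀ u v, g u v = true → g v u = false) →
      (∀ v, v ∉ S → (∀ s ∈ S, g v s = true) ∨ (∀ s ∈ S, g s v = true)) →
      ∀ v, v ∉ S → ∀ s ∈ S, g v s = decide (∀ t ∈ S, g v t = true) := by
    intro g hg hhom v hv s hs
    by_cases hall : ∀ t ∈ S, g v t = true
    · rw [hall s hs, decide_eq_true hall]
    · rw [decide_eq_false hall]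
      rcases hhom v hv with h | h
      · exact absurd h hall
      · exact hg s v (h s hs)
  have e1 : ∀ p : ↑A, f p.1.1 p.1.2 = f' p.1.1 p.1.2 := fun p =>
    congrFun (congrArg Prod.fst heq) p
  have e2 : ∀ v : ↑(Sᶜ), decide (∀ s ∈ S, f v.1 s = true) = decide (∀ s ∈ S, f' v.1 s = true) :=
    fun v => congrFun (congrArg Prod.snd heq) v
  -- same-side pairs u < v determined
  have same : ∀ u v : Fin i, u < v → (u ∈ S ↔ v ∈ S) → f u v = f' u v := by
    intro u v hlt hiff
    exact e1 ⟨(u, v), by simp [hA, hlt, hiff]⟩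
  have crossEq : ∀ v, v ∉ S → ∀ s ∈ S, f v s = f' v s := by
    intro v hv s hs
    rw [cross f ha hh v hv s hs, cross f' ha' hh' v hv s hs,
      e2 ⟨v, Finset.mem_compl.mpr hv⟩]
  funext u v
  by_cases huv : u = v
  · subst huv; rw [self f ha, self f' ha']
  by_cases hu : u ∈ S <;> by_cases hv : v ∈ S
  · -- both in S
    rcases lt_or_gt_of_ne huv with hlt | hgt
    · exact same u v hlt (by simp [hu, hv])
    · rw [neg f ha ht v u (Ne.symm huv), neg f' ha' ht' v u (Ne.symm huv),
        same v u hgt (by simp [hu, hv])]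
  · -- u ∈ S, v ∉ S
    rw [neg f ha ht v u (Ne.symm huv), neg f' ha' ht' v u (Ne.symm huv),
      crossEq v hv u hu]
  · -- u ∉ S, v ∈ S
    exact crossEq u hu v hv
  · -- both out
    rcases lt_or_gt_of_ne huv with hlt | hgt
    · exact same u v hlt (by simp [hu, hv])
    · rw [neg f ha ht v u (Ne.symm huv), neg f' ha' ht' v u (Ne.symm huv),
        same v u hgt (by simp [hu, hv])]

/-- For every integer i ≥ 1 and every ε₂ ∈ (0,1), the number of tournaments on
the fixed labelled vertex set {1,…,i} containing a homogeneous set S with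
i^(ε₂) ≤ |S| ≤ i/2 is at most 2^(i(i−1)/2) · 2^(3i/2 − i^(1+ε₂)/2). -/
theorem stmt18 (i : ℕ) (hi : 1 ≤ i) (eps : ℝ) (heps₁ : 0 < eps) (heps₂ : eps < 1) :
    ((((Finset.univ : Finset (Fin i → Fin i → Bool))).filter (fun f =>
        (∀ u v : Fin i, f u v = true → f v u = false) ∧
        (∀ u v : Fin i, u ≠ v → f u v = true ∨ f v u = true) ∧
        ∃ S : Finset (Fin i),
          (∀ v, v ∉ S → (∀ s ∈ S, f v s = true) ∨ (∀ s ∈ S, f s v = true)) ∧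
          (i : ℝ) ^ eps ≤ (S.card : ℝ) ∧ (S.card : ℝ) ≤ (i : ℝ) / 2)).card : ℝ) ≤
      (2 : ℝ) ^ (i * (i - 1) / 2) *
        (2 : ℝ) ^ (3 * (i : ℝ) / 2 - (i : ℝ) ^ ((1 : ℝ) + eps) / 2) := by
  classical
  set M : ℕ := i * (i - 1) / 2 with hM
  set iR : ℝ := (i : ℝ) with hiR
  have hiR1 : (1 : ℝ) ≤ iR := by rw [hiR]; exact_mod_cast hi
  have hiRpos : (0 : ℝ) < iR := by linarith
  set X : ℝ := iR ^ ((1 : ℝ) + eps) / 2 with hX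
  set 𝒮 : Finset (Finset (Fin i)) := (univ : Finset (Finset (Fin i))).filter
      (fun S => (i : ℝ) ^ eps ≤ (S.card : ℝ) ∧ (S.card : ℝ) ≤ (i : ℝ) / 2) with h𝒮
  set cond : Finset (Fin i) → (Fin i → Fin i → Bool) → Prop := fun S f =>
      (∀ u v : Fin i, f u v = true → f v u = false) ∧
      (∀ u v : Fin i, u ≠ v → f u v = true ∨ f v u = true) ∧
      (∀ v, v ∉ S → (∀ s ∈ S, f v s = true) ∨ (∀ s ∈ S, f s v = true)) with hcond
  have hsub : (((Finset.univ : Finset (Fin i → Fin i → Bool))).filter (fun f =>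
        (∀ u v : Fin i, f u v = true → f v u = false) ∧
        (∀ u v : Fin i, u ≠ v → f u v = true ∨ f v u = true) ∧
        ∃ S : Finset (Fin i),
          (∀ v, v ∉ S → (∀ s ∈ S, f v s = true) ∨ (∀ s ∈ S, f s v = true)) ∧
          (i : ℝ) ^ eps ≤ (S.card : ℝ) ∧ (S.card : ℝ) ≤ (i : ℝ) / 2))
      ⊆ 𝒮.biUnion (fun S => (univ : Finset (Fin i → Fin i → Bool)).filter (cond S)) := by
    intro f hf
    rw [Finset.mem_filter] at hf
    obtain ⟨-, hasym, htot, S, hhom, hsz1, hsz2⟩ := hf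
    rw [Finset.mem_biUnion]
    exact ⟨S, by simp [h𝒮, hsz1, hsz2], Finset.mem_filter.mpr
      ⟨Finset.mem_univ _, hasym, htot, hhom⟩⟩
  have hstep1 := le_trans (Finset.card_le_card hsub) (Finset.card_biUnion_le)
  -- per-term bound
  have hterm : ∀ S ∈ 𝒮,
      ((((univ : Finset (Fin i → Fin i → Bool)).filter (cond S)).card : ℝ))
        ≤ (2 : ℝ) ^ ((M : ℝ) + iR / 2 - X) := by
    intro S hS
    rw [h𝒮, Finset.mem_filter] at hS
    obtain ⟨-, hs1, hs2⟩ := hS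
    set sR : ℝ := (S.card : ℝ) with hsR
    have hScard : S.card ≤ i := le_trans (Finset.card_le_univ S) (by simp)
    have hcs : ((Sᶜ.card : ℕ) : ℝ) = iR - sR := by
      rw [Finset.card_compl, Fintype.card_fin, Nat.cast_sub hScard]
    have hnat := pairs_bound i S
    have hcnt := count_fixed i S
    set A : ℕ := ((univ : Finset (Fin i × Fin i)).filter
        (fun p => p.1 < p.2 ∧ (p.1 ∈ S ↔ p.2 ∈ S))).card with hAdef
    have hAM : (A : ℝ) + sR * (iR - sR) ≤ (M : ℝ) := by
      have : (A : ℝ) + (S.card : ℝ) * ((Sᶜ.card : ℕ) : ℝ) ≤ (M : ℝ) := by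
        exact_mod_cast hnat
      rw [hcs] at this
      exact this
    have h1e : (1 : ℝ) ≤ iR ^ eps := by
      have := Real.rpow_le_rpow_of_exponent_le hiR1 (le_of_lt heps₁)
      rwa [Real.rpow_zero] at this
    have hprod : (iR / 2) * (iR ^ eps - 1) ≤ (iR - sR) * (sR - 1) :=
      mul_le_mul (by linarith) (by linarith) (by linarith) (by linarith)
    have h1plus : iR ^ ((1 : ℝ) + eps) = iR * iR ^ eps := by
      rw [Real.rpow_add hiRpos, Real.rpow_one]
    have hexp : (A : ℝ) + ((Sᶜ.card : ℕ) : ℝ) ≤ (M : ℝ) + iR / 2 - X := by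
      rw [hcs, hX, h1plus]
      nlinarith [hAM, hprod]
    calc ((((univ : Finset (Fin i → Fin i → Bool)).filter (cond S)).card : ℝ))
        ≤ (2 : ℝ) ^ A * 2 ^ Sᶜ.card := by exact_mod_cast hcnt
      _ = (2 : ℝ) ^ ((A : ℝ) + ((Sᶜ.card : ℕ) : ℝ)) := by
          rw [Real.rpow_add two_pos, Real.rpow_natCast, Real.rpow_natCast]
      _ ≤ (2 : ℝ) ^ ((M : ℝ) + iR / 2 - X) :=
          Real.rpow_le_rpow_of_exponent_le one_le_two hexp
  have hsum : ((𝒮.sum fun S =>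
        ((univ : Finset (Fin i → Fin i → Bool)).filter (cond S)).card : ℕ) : ℝ)
      ≤ (𝒮.card : ℝ) * (2 : ℝ) ^ ((M : ℝ) + iR / 2 - X) := by
    push_cast
    calc (𝒮.sum fun S =>
          (((univ : Finset (Fin i → Fin i → Bool)).filter (cond S)).card : ℝ))
        ≤ 𝒮.sum (fun _ => (2 : ℝ) ^ ((M : ℝ) + iR / 2 - X)) := Finset.sum_le_sum hterm
      _ = (𝒮.card : ℝ) * (2 : ℝ) ^ ((M : ℝ) + iR / 2 - X) := by
          rw [Finset.sum_const, nsmul_eq_mul]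
  have hScount : (𝒮.card : ℝ) ≤ (2 : ℝ) ^ (iR) := by
    have h1 : 𝒮.card ≤ 2 ^ i := by
      have := Finset.card_filter_le (univ : Finset (Finset (Fin i)))
        (fun S => (i : ℝ) ^ eps ≤ (S.card : ℝ) ∧ (S.card : ℝ) ≤ (i : ℝ) / 2)
      simpa [Fintype.card_finset] using this
    calc (𝒮.card : ℝ) ≤ ((2 ^ i : ℕ) : ℝ) := by exact_mod_cast h1
      _ = (2 : ℝ) ^ (iR) := by
          rw [hiR, Real.rpow_natCast]; push_cast; ring
  calc ((((Finset.univ : Finset (Fin i → Fin i → Bool))).filter (fun f =>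
        (∀ u v : Fin i, f u v = true → f v u = false) ∧
        (∀ u v : Fin i, u ≠ v → f u v = true ∨ f v u = true) ∧
        ∃ S : Finset (Fin i),
          (∀ v, v ∉ S → (∀ s ∈ S, f v s = true) ∨ (∀ s ∈ S, f s v = true)) ∧
          (i : ℝ) ^ eps ≤ (S.card : ℝ) ∧ (S.card : ℝ) ≤ (i : ℝ) / 2)).card : ℝ)
      ≤ ((𝒮.sum fun S =>
        ((univ : Finset (Fin i → Fin i → Bool)).filter (cond S)).card : ℕ) : ℝ) := by
        exact_mod_cast hstep1
    _ ≤ (𝒮.card : ℝ) * (2 : ℝ) ^ ((M : ℝ) + iR / 2 - X) := hsum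
    _ ≤ (2 : ℝ) ^ (iR) * (2 : ℝ) ^ ((M : ℝ) + iR / 2 - X) := by
        apply mul_le_mul_of_nonneg_right hScount (le_of_lt (Real.rpow_pos_of_pos two_pos _))
    _ = (2 : ℝ) ^ M * (2 : ℝ) ^ (3 * iR / 2 - X) := by
        rw [← Real.rpow_natCast 2 M, ← Real.rpow_add two_pos, ← Real.rpow_add two_pos]
        congr 1; ring
end

section
/- Let t ≥ 1 be an integer and let M be a real number with M > t. Let G be an undirected graph whose vertex set is the disjoint union of nonempty finite sets A_1,…,A_t, and suppose that for all i ≠ j, every vertex v ∈ A_i has at least (1 − 1/M)·|A_j| neighbors in A_j. Then there exist vertices v_1 ∈ A_1, …, v_t ∈ A_t that are pairwise adjacent in G. -/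
open Finset

attribute [local instance] Classical.propDecidable

open Tournament

/-- Let t ≥ 1 be an integer and M > t a real number. Let G be an undirected
graph whose vertex set is the disjoint union of nonempty finite sets A_1,…,A_t, and suppose
that for all i ≠ j every vertex v ∈ A_i has at least (1 − 1/M)·|A_j| neighbors in A_j. Then
there exist pairwise adjacent vertices v_1 ∈ A_1, …, v_t ∈ A_t. -/
theorem stmt19 (V : Type*) [Fintype V] [DecidableEq V] (G : SimpleGraph V)
    (t : ℕ) (ht : 1 ≤ t) (M : ℝ) (hM : (t : ℝ) < M)
    (A : Fin t → Finset V) (hne : ∀ i, (A i).Nonempty)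
    (hdis : ∀ i j, i ≠ j → Disjoint (A i) (A j))
    (hcov : ∀ v : V, ∃ i, v ∈ A i)
    (hdeg : ∀ i j, i ≠ j → ∀ v ∈ A i,
      (1 - 1 / M) * ((A j).card : ℝ) ≤ (((A j).filter (G.Adj v)).card : ℝ)) :
    ∃ v : Fin t → V, (∀ i, v i ∈ A i) ∧ ∀ i j, i ≠ j → G.Adj (v i) (v j) := by

  have hM0 : (0:ℝ) < M := lt_of_le_of_lt (by positivity) hM
  have key : ∀ k (hk : k ≤ t), ∃ v : Fin k → V,
      (∀ i : Fin k, v i ∈ A (Fin.castLE hk i)) ∧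
      (∀ i j : Fin k, i < j → G.Adj (v i) (v j)) ∧
      (∀ j : Fin t, k ≤ (j:ℕ) →
        (1 - k / M) * ((A j).card : ℝ) ≤
          (((A j).filter fun u => ∀ i : Fin k, G.Adj (v i) u).card : ℝ)) := by
    intro k
    induction k with
    | zero =>
      intro hk
      refine ⟨Fin.elim0, fun i => i.elim0, fun i => i.elim0, fun j _ => ?_⟩
      have : ((A j).filter fun u => ∀ i : Fin 0, G.Adj (Fin.elim0 i) u) = A j := by
        apply Finset.filter_true_of_mem
        intro u _ i
        exact i.elim0
      rw [this]
      norm_num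
    | succ k ih =>
      intro hk
      obtain ⟨v, hv, hadj, hcard⟩ := ih (Nat.le_of_succ_le hk)
      have hkt : k < t := hk
      set jk : Fin t := ⟨k, hkt⟩ with hjk
      -- the set of candidate vertices in A jk
      set B := (A jk).filter (fun u => ∀ i : Fin k, G.Adj (v i) u) with hB
      have hBcard : (1 - k / M) * ((A jk).card : ℝ) ≤ (B.card : ℝ) := hcard jk le_rfl
      have hkM : (k:ℝ) / M < 1 := by
        rw [div_lt_one hM0]
        have : (k:ℝ) < t := by exact_mod_cast hkt
        linarith
      have hAjk : (0:ℝ) < ((A jk).card : ℝ) := by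
        exact_mod_cast Finset.card_pos.mpr (hne jk)
      have hBpos : 0 < B.card := by
        have : (0:ℝ) < (B.card : ℝ) := lt_of_lt_of_le (by nlinarith) hBcard
        exact_mod_cast this
      obtain ⟨w, hw⟩ := Finset.card_pos.mp hBpos
      rw [hB, Finset.mem_filter] at hw
      refine ⟨Fin.snoc v w, ?_, ?_, ?_⟩
      · intro i
        rcases Fin.eq_castSucc_or_eq_last i with ⟨i', rfl⟩ | rfl
        · rw [Fin.snoc_castSucc]
          have : Fin.castLE hk (Fin.castSucc i') = Fin.castLE (Nat.le_of_succ_le hk) i' :=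
            Fin.ext rfl
          rw [this]; exact hv i'
        · rw [Fin.snoc_last]
          have : Fin.castLE hk (Fin.last k) = jk := Fin.ext rfl
          rw [this]; exact hw.1
      · intro i j hij
        rcases Fin.eq_castSucc_or_eq_last j with ⟨j', rfl⟩ | rfl
        · have hilt : i < Fin.last k := lt_of_lt_of_le hij (Fin.le_last _)
          obtain ⟨i', rfl⟩ := (Fin.eq_castSucc_or_eq_last i).resolve_right
            (by rintro rfl; exact lt_irrefl _ hilt)
          rw [Fin.snoc_castSucc, Fin.snoc_castSucc]
          exact hadj i' j' (by exact_mod_cast hij)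
        · obtain ⟨i', rfl⟩ := (Fin.eq_castSucc_or_eq_last i).resolve_right
            (by rintro rfl; exact lt_irrefl _ hij)
          rw [Fin.snoc_castSucc, Fin.snoc_last]
          exact hw.2 i'
      · intro j hj
        have hjk_ne : jk ≠ j := by
          intro h
          have : (j : ℕ) = k := by rw [← h]
          omega
        set P := (A j).filter (fun u => ∀ i : Fin k, G.Adj (v i) u) with hP
        set Q := (A j).filter (G.Adj w) with hQ
        have hPQ : ((A j).filter fun u => ∀ i : Fin (k+1), G.Adj ((Fin.snoc v w : Fin (k+1) → V) i) u)
            = P ∩ Q := by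
          ext u
          simp only [hP, hQ, Finset.mem_inter, Finset.mem_filter]
          constructor
          · intro ⟨hu, hall⟩
            refine ⟨⟨hu, fun i => ?_⟩, hu, ?_⟩
            · have := hall (Fin.castSucc i); rwa [Fin.snoc_castSucc] at this
            · have := hall (Fin.last k); rwa [Fin.snoc_last] at this
          · intro ⟨⟨hu, hall⟩, _, hwu⟩
            refine ⟨hu, fun i => ?_⟩
            rcases Fin.eq_castSucc_or_eq_last i with ⟨i', rfl⟩ | rfl
            · rw [Fin.snoc_castSucc]; exact hall i'
            · rw [Fin.snoc_last]; exact hwu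
        rw [hPQ]
        have hunion : (P ∪ Q).card ≤ (A j).card :=
          Finset.card_le_card (Finset.union_subset (Finset.filter_subset _ _)
            (Finset.filter_subset _ _))
        have hie : (P ∪ Q).card + (P ∩ Q).card = P.card + Q.card :=
          Finset.card_union_add_card_inter P Q
        have hPc : (1 - k / M) * ((A j).card : ℝ) ≤ (P.card : ℝ) :=
          hcard j (Nat.le_of_succ_le hj)
        have hQc : (1 - 1 / M) * ((A j).card : ℝ) ≤ (Q.card : ℝ) :=
          hdeg jk j hjk_ne w hw.1
        have h1 : ((P ∪ Q).card : ℝ) ≤ ((A j).card : ℝ) := by exact_mod_cast hunion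
        have h2 : ((P ∪ Q).card : ℝ) + ((P ∩ Q).card : ℝ) = (P.card : ℝ) + (Q.card : ℝ) := by
          exact_mod_cast hie
        have hdiv : ((k:ℝ)+1) / M = (k:ℝ)/M + 1/M := by ring
        push_cast
        rw [hdiv]
        nlinarith [hPc, hQc, h1, h2]
  obtain ⟨v, hv, hadj, _⟩ := key t le_rfl
  refine ⟨v, fun i => ?_, fun i j hij => ?_⟩
  · have : Fin.castLE le_rfl i = i := Fin.ext rfl
    have h := hv i; rwa [this] at h
  · rcases lt_or_gt_of_ne hij with h | h
    · exact hadj i j h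
    · exact (hadj j i h).symm
end
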